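/- (Universal matching, exact form.) Let N be a finite set and let v, v_and, v_or : Finset N → ℝ satisfy the decomposition v(T) = v_and(T) + v_or(T) + v(∅) for every T ⊆ N. Define the AND interactions I_and(S) = ∑_{L ⊆ S} (-1)^{|S|-|L|} (v_and(L) - v_and(∅)) and the OR interactions I_or(S) = -∑_{L ⊆ S} (-1)^{|S|-|L|} v_or(N \ L). Then for every T ⊆ N, the network output on the masked sample is universally matched by interactions: v(T) = ∑_{∅ ≠ S ⊆ T} I_and(S) + ∑_{S ⊆ N, S ∩ T ≠ ∅} I_or(S) + v(∅). -/

import Mathlib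

open Finset

lemma sum_powerset_neg_one_pow_card_real {α : Type*} [DecidableEq α] (x : Finset α) :
    (∑ m ∈ x.powerset, (-1 : ℝ) ^ m.card) = if x = ∅ then 1 else 0 := by
  have h := Finset.sum_powerset_neg_one_pow_card (x := x)
  have : ((∑ m ∈ x.powerset, (-1 : ℤ) ^ m.card : ℤ) : ℝ)
      = ∑ m ∈ x.powerset, (-1 : ℝ) ^ m.card := by push_cast; rfl
  rw [← this, h]
  split <;> norm_num

lemma innerSumPow {N : Type*} [DecidableEq N] (L T : Finset N) (hLT : L ⊆ T) :
    (∑ S ∈ T.powerset.filter (fun S => L ⊆ S), (-1 : ℝ) ^ (S.card - L.card))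
      = if L = T then 1 else 0 := by
  have key : (∑ S ∈ T.powerset.filter (fun S => L ⊆ S), (-1 : ℝ) ^ (S.card - L.card))
      = ∑ M ∈ (T \ L).powerset, (-1 : ℝ) ^ M.card := by
    refine Finset.sum_bij' (fun S _ => S \ L) (fun M _ => L ∪ M) ?_ ?_ ?_ ?_ ?_
    · intro S hS
      simp only [mem_filter, mem_powerset] at hS
      exact mem_powerset.2 (sdiff_subset_sdiff hS.1 (le_refl L))
    · intro M hM
      simp only [mem_powerset] at hM
      refine mem_filter.2 ⟨mem_powerset.2 (union_subset hLT (hM.trans sdiff_subset)), subset_union_left⟩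
    · intro S hS
      simp only [mem_filter, mem_powerset] at hS
      exact union_sdiff_of_subset hS.2
    · intro M hM
      simp only [mem_powerset] at hM
      exact union_sdiff_cancel_left (disjoint_of_subset_right hM disjoint_sdiff)
    · intro S hS
      simp only [mem_filter, mem_powerset] at hS
      rw [card_sdiff_of_subset hS.2]
  rw [key, sum_powerset_neg_one_pow_card_real]
  exact if_congr (sdiff_eq_empty_iff_subset.trans
    ⟨fun h => subset_antisymm hLT h, fun h => h ▸ subset_rfl⟩) rfl rfl

lemma mobius_sum {N : Type*} [DecidableEq N] (f : Finset N → ℝ) (T : Finset N) :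
    (∑ S ∈ T.powerset, ∑ L ∈ S.powerset, (-1 : ℝ) ^ (S.card - L.card) * f L) = f T := by
  rw [Finset.sum_comm' (s' := fun L => T.powerset.filter (fun S => L ⊆ S)) (t' := T.powerset)
    (by
      intro S L
      simp only [mem_powerset, mem_filter]
      constructor
      · rintro ⟨h1, h2⟩; exact ⟨⟨h1, h2⟩, h2.trans h1⟩
      · rintro ⟨⟨h1, h2⟩, h3⟩; exact ⟨h1, h2⟩)]
  have : ∀ L ∈ T.powerset,
      (∑ S ∈ T.powerset.filter (fun S => L ⊆ S), (-1 : ℝ) ^ (S.card - L.card) * f L)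
      = (if L = T then 1 else 0) * f L := by
    intro L hL
    rw [← Finset.sum_mul, innerSumPow L T (mem_powerset.1 hL)]
  rw [Finset.sum_congr rfl this]
  simp [Finset.sum_ite_eq' T.powerset T (fun L => f L)]

/-- **Universal matching (exact form).**
If `v(T) = v_and(T) + v_or(T) + v(∅)` for every `T ⊆ N`, with AND interactions
`I_and(S) = ∑_{L ⊆ S} (-1)^{|S|-|L|} (v_and(L) - v_and(∅))` and OR interactions
`I_or(S) = -∑_{L ⊆ S} (-1)^{|S|-|L|} v_or(N \ L)`, then for every `T ⊆ N`:
`v(T) = ∑_{∅ ≠ S ⊆ T} I_and(S) + ∑_{S ⊆ N, S ∩ T ≠ ∅} I_or(S) + v(∅)`. -/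
theorem universal_matching {N : Type*} [Fintype N] [DecidableEq N]
    (v vand vor : Finset N → ℝ)
    (hdecomp : ∀ T : Finset N, v T = vand T + vor T + v ∅) (T : Finset N) :
    v T =
      (∑ S ∈ T.powerset.filter (fun S => S ≠ ∅),
        (∑ L ∈ S.powerset, (-1 : ℝ) ^ (S.card - L.card) * (vand L - vand ∅))) +
      (∑ S ∈ (Finset.univ : Finset (Finset N)).filter (fun S => S ∩ T ≠ ∅),
        (-(∑ L ∈ S.powerset, (-1 : ℝ) ^ (S.card - L.card) * vor Lᶜ))) +
      v ∅ := by
  have h0 : vand ∅ + vor ∅ = 0 := by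
    have := hdecomp ∅
    linarith
  -- AND part
  have hAnd : (∑ S ∈ T.powerset.filter (fun S => S ≠ ∅),
      (∑ L ∈ S.powerset, (-1 : ℝ) ^ (S.card - L.card) * (vand L - vand ∅)))
      = vand T - vand ∅ := by
    have hsplit : (∑ S ∈ T.powerset,
        (∑ L ∈ S.powerset, (-1 : ℝ) ^ (S.card - L.card) * (vand L - vand ∅)))
        = vand T - vand ∅ := mobius_sum (fun L => vand L - vand ∅) T
    have hmem : (∅ : Finset N) ∈ T.powerset := mem_powerset.2 (empty_subset T)
    rw [← Finset.sum_filter_add_sum_filter_not T.powerset (fun S => S ≠ ∅)] at hsplit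
    have : (∑ S ∈ T.powerset.filter (fun S => ¬S ≠ ∅),
        (∑ L ∈ S.powerset, (-1 : ℝ) ^ (S.card - L.card) * (vand L - vand ∅))) = 0 := by
      rw [Finset.sum_eq_single (∅ : Finset N)]
      · simp
      · intro b hb hne
        simp only [mem_filter, not_not] at hb
        exact absurd hb.2 hne
      · intro h
        exact absurd (mem_filter.2 ⟨hmem, by simp⟩) h
    linarith
  -- OR part
  have hOrAll : (∑ S ∈ (Finset.univ : Finset (Finset N)),
      (-(∑ L ∈ S.powerset, (-1 : ℝ) ^ (S.card - L.card) * vor Lᶜ))) = -vor ∅ := by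
    rw [← Finset.powerset_univ, Finset.sum_neg_distrib,
      mobius_sum (fun L => vor Lᶜ) Finset.univ]
    simp
  have hOrDisj : (∑ S ∈ (Finset.univ : Finset (Finset N)).filter (fun S => ¬S ∩ T ≠ ∅),
      (-(∑ L ∈ S.powerset, (-1 : ℝ) ^ (S.card - L.card) * vor Lᶜ))) = -vor T := by
    have heq : (Finset.univ : Finset (Finset N)).filter (fun S => ¬S ∩ T ≠ ∅)
        = Tᶜ.powerset := by
      ext S
      simp only [mem_filter, mem_univ, true_and, not_not, mem_powerset,
        ← Finset.disjoint_iff_inter_eq_empty]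
      exact le_compl_iff_disjoint_right.symm
    rw [heq, Finset.sum_neg_distrib, mobius_sum (fun L => vor Lᶜ) Tᶜ]
    simp
  have hOr : (∑ S ∈ (Finset.univ : Finset (Finset N)).filter (fun S => S ∩ T ≠ ∅),
      (-(∑ L ∈ S.powerset, (-1 : ℝ) ^ (S.card - L.card) * vor Lᶜ)))
      = vor T - vor ∅ := by
    have := Finset.sum_filter_add_sum_filter_not (Finset.univ : Finset (Finset N))
      (fun S => S ∩ T ≠ ∅)
      (fun S => (-(∑ L ∈ S.powerset, (-1 : ℝ) ^ (S.card - L.card) * vor Lᶜ)))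
    rw [hOrAll] at this
    rw [hOrDisj] at this
    linarith
  rw [hAnd, hOr, hdecomp T]
  linarith
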